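/- An infinite Hausdorff space is boring (i.e., sequentially compact and such that some finite set F ⊆ X has the property that every one-to-one convergent sequence in X converges to a point of F) if and only if it is homeomorphic to a topological disjoint union of finitely many one-point compactifications of infinite discrete spaces. -/

import Mathlib

open Set Filter

universe u

/-- The one-point compactification of a set considered as a discrete space. -/
def OnePointDiscrete (D : Type u) : Type u := OnePoint D

noncomputable instance (D : Type u) : TopologicalSpace (OnePointDiscrete D) :=
  letI : TopologicalSpace D := ⊥
  inferInstanceAs (TopologicalSpace (OnePoint D))

section Helpers

variable {α : Type*}

/-- Every sequence has a constant subsequence or an injective subsequence. -/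
lemma exists_const_or_inj_subseq (w : ℕ → α) :
    (∃ z, ∃ φ : ℕ → ℕ, StrictMono φ ∧ ∀ n, w (φ n) = z) ∨
    (∃ φ : ℕ → ℕ, StrictMono φ ∧ Function.Injective (w ∘ φ)) := by
  by_cases hc : ∃ z, {k | w k = z}.Infinite
  · obtain ⟨z, hz⟩ := hc
    exact Or.inl ⟨z, Nat.nth _, Nat.nth_strictMono hz, fun n => Nat.nth_mem_of_infinite hz n⟩
  · push_neg at hc
    have key : ∀ N : ℕ, ∃ k, N < k ∧ w k ∉ w '' (Set.Iic N) := by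
      intro N
      have hfin : ({k | w k ∈ w '' Set.Iic N} ∪ Set.Iic N).Finite := by
        refine Set.Finite.union (Set.Finite.subset
          (Set.Finite.biUnion (Set.finite_Iic N) (fun j _ => hc (w j)))
          ?_) (Set.finite_Iic N)
        rintro k ⟨j, hj, hjk⟩
        exact Set.mem_biUnion hj hjk.symm
      obtain ⟨k, hk⟩ := hfin.infinite_compl.nonempty
      rw [Set.mem_compl_iff, Set.mem_union, not_or] at hk
      exact ⟨k, by simpa using hk.2, hk.1⟩
    choose next hn1 hn2 using key
    set φ : ℕ → ℕ := fun n => Nat.rec 0 (fun _ prev => next prev) n with hφ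
    have hstep : ∀ n, φ (n + 1) = next (φ n) := fun n => rfl
    have hmono : StrictMono φ := strictMono_nat_of_lt_succ (fun n => hn1 (φ n))
    have hne : ∀ m n, m < n → w (φ m) ≠ w (φ n) := by
      intro m n hmn
      obtain ⟨n', rfl⟩ : ∃ n', n = n' + 1 := ⟨n - 1, by omega⟩
      intro h
      refine hn2 (φ n') ⟨φ m, hmono.monotone (by omega), ?_⟩
      rw [← hstep n']
      exact h
    refine Or.inr ⟨φ, hmono, ?_⟩
    intro a b hab
    rcases lt_trichotomy a b with h | h | h
    · exact absurd hab (hne a b h)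
    · exact h
    · exact absurd hab.symm (hne b a h)

variable {D : Type u}

section Gen
variable [TopologicalSpace D] [DiscreteTopology D]

lemma op_isOpen_of_not_mem {s : Set (OnePoint D)} (h : OnePoint.infty ∉ s) :
    IsOpen s := by
  rw [OnePoint.isOpen_iff_of_notMem h]
  exact isOpen_discrete _

lemma op_isOpen_of_finite_compl {s : Set (OnePoint D)} (hinfm : OnePoint.infty ∈ s)
    (h : sᶜ.Finite) : IsOpen s := by
  rw [OnePoint.isOpen_iff_of_mem hinfm]
  have hfin : ((↑) ⁻¹' s : Set D)ᶜ.Finite := by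
    rw [← Set.preimage_compl]
    exact h.preimage (OnePoint.coe_injective.injOn)
  exact ⟨hfin.isClosed, hfin.isCompact⟩

lemma op_compl_finite_of_mem_nhds {s : Set (OnePoint D)}
    (h : s ∈ nhds (OnePoint.infty : OnePoint D)) : sᶜ.Finite := by
  obtain ⟨U, hUs, hUo, hinfmU⟩ := mem_nhds_iff.mp h
  have hUc : (Uᶜ : Set (OnePoint D)).Finite := by
    have := ((OnePoint.isOpen_iff_of_mem hinfmU).mp hUo).2
    have hfin : ((↑) ⁻¹' U : Set D)ᶜ.Finite := this.finite_of_discrete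
    have hsub : (Uᶜ : Set (OnePoint D)) ⊆ insert OnePoint.infty ((↑) '' (((↑) ⁻¹' U : Set D)ᶜ)) := by
      intro z hz
      induction z using OnePoint.rec with
      | infty => exact Set.mem_insert _ _
      | coe d => exact Set.mem_insert_iff.mpr (Or.inr ⟨d, hz, rfl⟩)
    exact Set.Finite.subset ((hfin.image _).insert _) hsub
  exact hUc.subset (Set.compl_subset_compl.mpr hUs)

lemma op_seqCompact : SeqCompactSpace (OnePoint D) := by
  constructor
  intro w _
  rcases exists_const_or_inj_subseq w with ⟨z, φ, hφ, hconst⟩ | ⟨φ, hφ, hinj⟩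
  · refine ⟨z, Set.mem_univ _, φ, hφ, ?_⟩
    have : (w ∘ φ) = fun _ => z := funext hconst
    rw [this]
    exact tendsto_const_nhds
  · refine ⟨OnePoint.infty, Set.mem_univ _, φ, hφ, ?_⟩
    rw [tendsto_nhds]
    intro U hUo h
    have hUc : Uᶜ.Finite := op_compl_finite_of_mem_nhds (hUo.mem_nhds h)
    have hbad : {k | (w ∘ φ) k ∈ Uᶜ}.Finite := hUc.preimage hinj.injOn
    have hev : ∀ᶠ k in cofinite, (w ∘ φ) k ∈ U := by
      rw [Filter.eventually_cofinite]
      simpa using hbad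
    rw [Nat.cofinite_eq_atTop] at hev
    exact hev

end Gen

lemma opd_isOpen_of_not_mem {s : Set (OnePointDiscrete D)} (h : OnePoint.infty ∉ s) :
    IsOpen s := by
  letI : TopologicalSpace D := ⊥
  haveI : DiscreteTopology D := ⟨rfl⟩
  exact op_isOpen_of_not_mem h

lemma opd_isOpen_of_finite_compl {s : Set (OnePointDiscrete D)} (hinfm : OnePoint.infty ∈ s)
    (h : sᶜ.Finite) : IsOpen s := by
  letI : TopologicalSpace D := ⊥
  haveI : DiscreteTopology D := ⟨rfl⟩
  exact op_isOpen_of_finite_compl hinfm h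

lemma opd_seqCompact : SeqCompactSpace (OnePointDiscrete D) := by
  letI : TopologicalSpace D := ⊥
  haveI : DiscreteTopology D := ⟨rfl⟩
  exact op_seqCompact

lemma opd_compactSpace : CompactSpace (OnePointDiscrete D) := by
  letI : TopologicalSpace D := ⊥
  exact inferInstanceAs (CompactSpace (OnePoint D))

end Helpers
section SigmaSC
variable {n : ℕ} {Z : Fin n → Type u} [∀ i, TopologicalSpace (Z i)] [∀ i, SeqCompactSpace (Z i)]

lemma sigma_seqCompact : SeqCompactSpace (Σ i, Z i) := by
  constructor
  intro u _
  obtain ⟨i, hi⟩ := Finite.exists_infinite_fiber (fun k => (u k).1)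
  have hS : {k | (u k).1 = i}.Infinite := by
    rw [← Set.infinite_coe_iff]
    exact hi
  set p : ℕ → Prop := fun k => (u k).1 = i with hp
  have hfst : ∀ k, (u (Nat.nth p k)).1 = i := fun k => Nat.nth_mem_of_infinite hS k
  set v : ℕ → Z i := fun k => cast (congrArg Z (hfst k)) (u (Nat.nth p k)).2 with hv
  have key : ∀ k, u (Nat.nth p k) = ⟨i, v k⟩ := by
    intro k
    refine Sigma.ext (hfst k) ?_
    exact (cast_heq _ _).symm
  obtain ⟨l, -, ψ, hψ, hconv⟩ := isSeqCompact_univ (x := v) (fun k => Set.mem_univ _)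
  refine ⟨⟨i, l⟩, Set.mem_univ _, Nat.nth p ∘ ψ, (Nat.nth_strictMono hS).comp hψ, ?_⟩
  have : u ∘ (Nat.nth p ∘ ψ) = Sigma.mk i ∘ (v ∘ ψ) := by
    funext k
    exact key (ψ k)
  rw [this]
  exact (continuous_sigmaMk.tendsto l).comp hconv

end SigmaSC

theorem backward {X : Type u} [TopologicalSpace X] [T2Space X]
    {n : ℕ} {D : Fin n → Type u} (hInf : ∀ i, Infinite (D i))
    (h : X ≃ₜ (Σ i, OnePointDiscrete (D i))) :
    SeqCompactSpace X ∧ ∃ F : Set X, F.Finite ∧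
    ∀ x : ℕ → X, Function.Injective x → ∀ l : X,
      Filter.Tendsto x Filter.atTop (nhds l) → l ∈ F := by
  haveI : ∀ i, SeqCompactSpace (OnePointDiscrete (D i)) := fun i => opd_seqCompact
  haveI hsc : SeqCompactSpace (Σ i, OnePointDiscrete (D i)) := sigma_seqCompact
  constructor
  · constructor
    intro u _
    obtain ⟨l, -, φ, hφ, hconv⟩ := isSeqCompact_univ (x := h ∘ u) (fun k => Set.mem_univ _)
    refine ⟨h.symm l, Set.mem_univ _, φ, hφ, ?_⟩
    have : u ∘ φ = h.symm ∘ ((h ∘ u) ∘ φ) := by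
      funext k; simp
    rw [this]
    exact (h.symm.continuous.tendsto l).comp hconv
  · refine ⟨Set.range (fun i => h.symm ⟨i, OnePoint.infty⟩), Set.finite_range _, ?_⟩
    intro x hx l hl
    rcases hhl : h l with ⟨i, z⟩
    induction z using OnePoint.rec with
    | infty =>
      refine ⟨i, ?_⟩
      show h.symm ⟨i, OnePoint.infty⟩ = l
      rw [← hhl]
      exact h.symm_apply_apply l
    | coe d =>
      exfalso
      have hopen : IsOpen ({⟨i, (d : OnePoint (D i))⟩} : Set (Σ j, OnePointDiscrete (D j))) := by
        have h1 : IsOpen ({(d : OnePoint (D i))} : Set (OnePointDiscrete (D i))) :=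
          opd_isOpen_of_not_mem (fun hm => OnePoint.infty_ne_coe d hm)
        have := isOpenMap_sigmaMk (σ := fun j => OnePointDiscrete (D j)) (i := i)
          ({(d : OnePoint (D i))} : Set (OnePointDiscrete (D i))) h1
        have e := Set.image_singleton
          (f := @Sigma.mk (Fin n) (fun j => OnePointDiscrete (D j)) i)
          (a := ((d : OnePoint (D i)) : OnePointDiscrete (D i)))
        exact Eq.mp (congrArg IsOpen e) this
      have htend : Filter.Tendsto (h ∘ x) Filter.atTop (nhds (h l)) :=
        (h.continuous.tendsto l).comp hl
      have hev : ∀ᶠ k in Filter.atTop, (h ∘ x) k ∈ ({⟨i, (d : OnePoint (D i))⟩} : Set (Σ j, OnePointDiscrete (D j))) := by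
        rw [tendsto_nhds] at htend
        exact htend _ hopen (by rw [hhl]; rfl)
      obtain ⟨N, hN⟩ := Filter.eventually_atTop.mp hev
      have h1 : (h ∘ x) N = (h ∘ x) (N + 1) := by
        rw [hN N le_rfl, hN (N + 1) (by omega)]
      have := hx (h.injective h1)
      omega

theorem forward {X : Type u} [TopologicalSpace X] [T2Space X] [Infinite X]
    (hseq : SeqCompactSpace X) (F : Set X) (hFfin : F.Finite)
    (hFlim : ∀ x : ℕ → X, Function.Injective x → ∀ l : X,
      Filter.Tendsto x Filter.atTop (nhds l) → l ∈ F) :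
    ∃ (n : ℕ) (D : Fin n → Type u), (∀ i, Infinite (D i)) ∧
      Nonempty (X ≃ₜ (Σ i, OnePointDiscrete (D i))) := by
  classical
  -- accumulation points of infinite sets lie in F
  have acc : ∀ S : Set X, S.Infinite → ∃ l ∈ F, ∀ U ∈ nhds l, (U ∩ S).Infinite := by
    intro S hS
    have e := hS.natEmbedding
    have hxinj : Function.Injective (fun k => (e k : X)) :=
      fun a b hab => e.injective (Subtype.val_injective hab)
    obtain ⟨l, -, φ, hφ, hconv⟩ := isSeqCompact_univ (x := fun k => (e k : X))
      (fun k => Set.mem_univ _)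
    refine ⟨l, hFlim _ (hxinj.comp hφ.injective) l hconv, ?_⟩
    intro U hU
    obtain ⟨N, hN⟩ := Filter.eventually_atTop.mp (hconv (hU))
    refine Set.infinite_of_injective_forall_mem
      (f := fun m : ℕ => ((e (φ (N + m)) : X))) ?_ ?_
    · intro a b hab
      have h1 : e (φ (N + a)) = e (φ (N + b)) := Subtype.ext hab
      have h2 : φ (N + a) = φ (N + b) := e.injective h1
      have := hφ.injective h2
      omega
    · intro m
      exact ⟨hN (N + m) (by omega), (e (φ (N + m))).2⟩
  -- the set of non-isolated points
  set NI : Set X := {x | ¬ IsOpen ({x} : Set X)} with hNI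
  -- accumulation points are non-isolated
  have acc2 : ∀ S : Set X, S.Infinite → ∃ l ∈ NI, ∀ U ∈ nhds l, (U ∩ S).Infinite := by
    intro S hS
    obtain ⟨l, -, hl⟩ := acc S hS
    refine ⟨l, ?_, hl⟩
    intro hop
    have := hl {l} (hop.mem_nhds rfl)
    exact this ((Set.finite_singleton l).subset Set.inter_subset_left)
  -- neighborhoods of non-isolated points are infinite
  have nbhd_inf : ∀ x ∈ NI, ∀ U ∈ nhds x, U.Infinite := by
    intro x hx U hU
    by_contra hfin
    rw [Set.not_infinite] at hfin
    have h1 : IsOpen (interior U ∩ (U \ {x})ᶜ) :=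
      isOpen_interior.inter (hfin.subset Set.diff_subset).isClosed.isOpen_compl
    have h2 : interior U ∩ (U \ {x})ᶜ = {x} := by
      apply Set.eq_singleton_iff_unique_mem.mpr
      constructor
      · exact ⟨mem_interior_iff_mem_nhds.mpr hU, fun h => h.2 rfl⟩
      · intro y hy
        by_contra hne
        exact hy.2 ⟨interior_subset hy.1, hne⟩
    exact hx (h2 ▸ h1)
  -- non-isolated points are in F, so NI is finite
  have hNIF : NI ⊆ F := by
    intro x hx
    by_contra hxF
    have hsep : ∀ f ∈ F, ∃ uv : Set X × Set X, IsOpen uv.1 ∧ IsOpen uv.2 ∧ f ∈ uv.1 ∧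
        x ∈ uv.2 ∧ Disjoint uv.1 uv.2 := by
      intro f hf
      obtain ⟨a, b, ha, hb, hfa, hxb, hd⟩ :=
        t2_separation (show f ≠ x from fun h => hxF (h ▸ hf))
      exact ⟨(a, b), ha, hb, hfa, hxb, hd⟩
    choose! uv huo hvo hfu hxv hduv using hsep
    have hV0 : (⋂ f ∈ F, (uv f).2) ∈ nhds x :=
      (Filter.biInter_mem hFfin).mpr (fun f hf => ((hvo f hf).mem_nhds (hxv f hf)))
    obtain ⟨l, hlF, hl⟩ := acc _ (nbhd_inf x hx _ hV0)
    have h1 := hl (uv l).1 (((huo l hlF).mem_nhds (hfu l hlF)))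
    obtain ⟨y, hy1, hy2⟩ := h1.nonempty
    exact (hduv l hlF).ne_of_mem hy1 (Set.biInter_subset_of_mem hlF hy2) rfl
  have hNIfin : NI.Finite := hFfin.subset hNIF
  have hNIne : NI.Nonempty := by
    obtain ⟨l, hl, -⟩ := acc2 Set.univ Set.infinite_univ
    exact ⟨l, hl⟩
  -- enumerate NI
  haveI := hNIfin.fintype
  obtain ⟨n, ι, hιinj, hιrange⟩ : ∃ (n : ℕ) (ι : Fin n → X),
      Function.Injective ι ∧ Set.range ι = NI := by
    refine ⟨Fintype.card NI, fun i => ((Fintype.equivFin NI).symm i : X),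
      fun a b hab => (Fintype.equivFin NI).symm.injective (Subtype.val_injective hab), ?_⟩
    ext x
    constructor
    · rintro ⟨i, rfl⟩
      exact ((Fintype.equivFin NI).symm i).2
    · intro hx
      exact ⟨Fintype.equivFin NI ⟨x, hx⟩, by simp⟩
  have hn : 0 < n := by
    obtain ⟨x, hx⟩ := hNIne
    rw [← hιrange] at hx
    obtain ⟨i, -⟩ := hx
    exact i.pos
  -- pairwise disjoint open neighborhoods of the points of NI
  have hsep2 : ∀ i j : Fin n, i ≠ j → ∃ uv : Set X × Set X, IsOpen uv.1 ∧ IsOpen uv.2 ∧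
      ι i ∈ uv.1 ∧ ι j ∈ uv.2 ∧ Disjoint uv.1 uv.2 := by
    intro i j hij
    obtain ⟨a, b, ha, hb, hia, hjb, hd⟩ := t2_separation (fun h => hij (hιinj h))
    exact ⟨(a, b), ha, hb, hia, hjb, hd⟩
  choose! st hso hto hsmem htmem hstdisj using hsep2
  set W : Fin n → Set X := fun i => ⋂ j, ⋂ (h : i ≠ j), ((st i j).1 ∩ (st j i).2) with hW
  have hWo : ∀ i, IsOpen (W i) := fun i =>
    isOpen_iInter_of_finite (fun j => isOpen_iInter_of_finite (fun h =>
      ((hso i j h).inter (hto j i (Ne.symm h)))))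
  have hWmem : ∀ i, ι i ∈ W i := by
    intro i
    simp only [hW, Set.mem_iInter]
    intro j h
    exact ⟨hsmem i j h, htmem j i (Ne.symm h)⟩
  have hWsub1 : ∀ i j (h : i ≠ j), W i ⊆ (st i j).1 := by
    intro i j h x hx
    simp only [hW, Set.mem_iInter] at hx
    exact (hx j h).1
  have hWsub2 : ∀ i j (h : i ≠ j), W j ⊆ (st i j).2 := by
    intro i j h x hx
    simp only [hW, Set.mem_iInter] at hx
    exact (hx i (Ne.symm h)).2
  have hWdisj : ∀ i j, i ≠ j → Disjoint (W i) (W j) := fun i j h =>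
    Set.disjoint_of_subset (hWsub1 i j h) (hWsub2 i j h) (hstdisj i j h)
  -- the assignment of points to pieces
  set p : X → Fin n := fun x => if h : ∃ i, x ∈ W i then h.choose else ⟨0, hn⟩ with hp
  have hWp : ∀ i x, x ∈ W i → p x = i := by
    intro i x hx
    have h : ∃ i, x ∈ W i := ⟨i, hx⟩
    rw [hp]
    simp only [dif_pos h]
    by_contra hne
    exact Set.disjoint_left.mp (hWdisj _ _ hne) h.choose_spec hx
  have hpι : ∀ i, p (ι i) = i := fun i => hWp i _ (hWmem i)
  -- points other than the ι i are isolated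
  have hiso : ∀ x : X, x ≠ ι (p x) → IsOpen ({x} : Set X) := by
    intro x hx
    by_contra hop
    have hxNI : x ∈ NI := hop
    rw [← hιrange] at hxNI
    obtain ⟨i, rfl⟩ := hxNI
    rw [hpι] at hx
    exact hx rfl
  -- key finiteness: points of a piece outside a neighborhood of its special point
  have key : ∀ i, ∀ U ∈ nhds (ι i), {x | p x = i ∧ x ∉ U}.Finite := by
    intro i U hU
    by_contra hinf
    obtain ⟨l, hlNI, hl⟩ := acc2 _ hinf
    rw [← hιrange] at hlNI
    obtain ⟨j, rfl⟩ := hlNI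
    by_cases hij : j = i
    · subst hij
      obtain ⟨y, hyU, hy⟩ := (hl U hU).nonempty
      exact hy.2 hyU
    · obtain ⟨y, hyW, hy⟩ := (hl (W j) ((hWo j).mem_nhds (hWmem j))).nonempty
      exact hij (by rw [← hy.1, hWp j y hyW])
  -- the discrete pieces
  set Dty : Fin n → Type u := fun i => {x : X // p x = i ∧ x ≠ ι i} with hDty
  have hDinf : ∀ i, Infinite (Dty i) := by
    intro i
    have hSinf : {x : X | p x = i ∧ x ≠ ι i}.Infinite := by
      intro hfin
      have hxNI2 : ι i ∈ NI := hιrange ▸ Set.mem_range_self i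
      apply hxNI2
      have h1 : IsOpen (W i ∩ {x : X | p x = i ∧ x ≠ ι i}ᶜ) :=
        (hWo i).inter hfin.isClosed.isOpen_compl
      have h2 : W i ∩ {x : X | p x = i ∧ x ≠ ι i}ᶜ = {ι i} := by
        apply Set.eq_singleton_iff_unique_mem.mpr
        refine ⟨⟨hWmem i, fun h => h.2 rfl⟩, ?_⟩
        intro y hy
        by_contra hne
        exact hy.2 ⟨hWp i y hy.1, hne⟩
      exact h2 ▸ h1
    exact hSinf.to_subtype
  -- the gluing map
  set g : (Σ i, OnePointDiscrete (Dty i)) → X :=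
    fun a => Option.elim a.2 (ι a.1) Subtype.val with hg
  have hgsurj : Function.Surjective g := by
    intro x
    by_cases hx : x = ι (p x)
    · exact ⟨⟨p x, OnePoint.infty⟩, hx.symm⟩
    · exact ⟨⟨p x, OnePoint.some ⟨x, rfl, hx⟩⟩, rfl⟩
  have hginj : Function.Injective g := by
    rintro ⟨i, zi⟩ ⟨j, zj⟩ hgeq
    induction zi using OnePoint.rec with
    | infty =>
      induction zj using OnePoint.rec with
      | infty =>
        have hij : i = j := hιinj hgeq
        subst hij
        rfl
      | coe d =>
        exfalso
        have hgeq' : ι i = (d : Dty j).val := hgeq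
        have h1 : p ((d : Dty j).val) = j := d.2.1
        rw [← hgeq', hpι] at h1
        subst h1
        exact d.2.2 hgeq'.symm
    | coe d =>
      induction zj using OnePoint.rec with
      | infty =>
        exfalso
        have hgeq' : (d : Dty i).val = ι j := hgeq
        have h1 : p ((d : Dty i).val) = i := d.2.1
        rw [hgeq', hpι] at h1
        subst h1
        exact d.2.2 hgeq'
      | coe d' =>
        have hgeq' : (d : Dty i).val = (d' : Dty j).val := hgeq
        have hij : i = j := by rw [← d.2.1, ← d'.2.1, hgeq']
        subst hij
        have hdd : d = d' := Subtype.ext hgeq'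
        rw [hdd]
  have hgcont : Continuous g := by
    apply continuous_sigma
    intro i
    rw [continuous_iff_continuousAt]
    intro z
    induction z using OnePoint.rec with
    | coe d =>
      have hzopen : IsOpen ({(d : OnePoint (Dty i))} : Set (OnePointDiscrete (Dty i))) :=
        opd_isOpen_of_not_mem (fun hm => OnePoint.infty_ne_coe d hm)
      have hpure := (isOpen_singleton_iff_nhds_eq_pure (X := OnePointDiscrete (Dty i))
        ((d : OnePoint (Dty i)))).mp hzopen
      show Filter.Tendsto _ _ _
      rw [hpure]
      exact tendsto_pure_nhds _ _
    | infty =>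
      show Filter.Tendsto _ _ _
      rw [Filter.tendsto_def]
      intro U hU
      obtain ⟨V, hVU, hVo, hVmem⟩ := mem_nhds_iff.mp hU
      have hVmem' : ι i ∈ V := hVmem
      set T : Set (OnePointDiscrete (Dty i)) :=
        (fun z : OnePointDiscrete (Dty i) => g ⟨i, z⟩) ⁻¹' V with hT
      have hTinf : OnePoint.infty ∈ T := hVmem'
      have hTopen : IsOpen T := by
        apply opd_isOpen_of_finite_compl hTinf
        have hfin1 : {x : X | p x = i ∧ x ∉ V}.Finite := key i V (hVo.mem_nhds hVmem')
        have hfin2 : (Subtype.val ⁻¹' {x : X | p x = i ∧ x ∉ V} : Set (Dty i)).Finite :=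
          hfin1.preimage Subtype.val_injective.injOn
        refine (hfin2.image (fun d => (OnePoint.some d : OnePointDiscrete (Dty i)))).subset ?_
        intro z hz
        induction z using OnePoint.rec with
        | infty => exact absurd hTinf hz
        | coe d => exact ⟨d, ⟨d.2.1, hz⟩, rfl⟩
      refine Filter.mem_of_superset (hTopen.mem_nhds hTinf) ?_
      intro z hz
      exact hVU hz
  haveI hcompP : ∀ i, CompactSpace (OnePointDiscrete (Dty i)) := fun i => opd_compactSpace
  haveI : CompactSpace (Σ i, OnePointDiscrete (Dty i)) := inferInstance
  refine ⟨n, Dty, hDinf, ?_⟩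
  have hcont : Continuous (Equiv.ofBijective g ⟨hginj, hgsurj⟩ :
      (Σ i, OnePointDiscrete (Dty i)) → X) := hgcont
  exact ⟨(Continuous.homeoOfEquivCompactToT2 (f := Equiv.ofBijective g ⟨hginj, hgsurj⟩)
    hcont).symm⟩


/-- A (Hausdorff) space is boring: sequentially compact, and some finite set `F`
contains the limit of every injective convergent sequence. -/
def IsBoring (X : Type u) [TopologicalSpace X] : Prop :=
  SeqCompactSpace X ∧ ∃ F : Set X, F.Finite ∧
    ∀ x : ℕ → X, Function.Injective x → ∀ l : X,
      Filter.Tendsto x Filter.atTop (nhds l) → l ∈ F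

/-- an infinite Hausdorff space is boring iff it is homeomorphic to a
topological disjoint union of finitely many one-point compactifications of infinite
discrete spaces. -/
theorem stmt_14 {X : Type u} [TopologicalSpace X] [T2Space X] [Infinite X] :
    IsBoring X ↔ ∃ (n : ℕ) (D : Fin n → Type u), (∀ i, Infinite (D i)) ∧
      Nonempty (X ≃ₜ (Σ i, OnePointDiscrete (D i))) := by
  constructor
  · rintro ⟨hseq, F, hFfin, hFlim⟩
    exact forward hseq F hFfin hFlim
  · rintro ⟨n, D, hInf, ⟨h⟩⟩
    exact backward hInf h
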